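/- Let (ν_ε), (bar-ν_ε), (μ_ε), (bar-μ_ε), ε ∈ (0,1), be families of transition kernels on ℝ that are finite on bounded Borel sets, and let ϰ, ϰ′, ϰ″ > 0. Assume: (h1) there is δ > 0 such that sup over x ∈ K_ϰ(ε) and intervals [a,b] ⊆ K_{ϰ′}(ε) of |ν_ε(x,[a,b]) − bar-ν_ε(x,[a,b])| is o(ε^δ) as ε → 0⁺; (h2) there is δ′ > 0 such that sup over y ∈ K_{ϰ′}(ε) and intervals [a,b] ⊆ K_{ϰ″}(ε) of |μ_ε(y,[a,b]) − bar-μ_ε(y,[a,b])| is o(ε^{δ′}) as ε → 0⁺; (h3) there is p ≥ 0 such that sup over x ∈ K_ϰ(ε) of bar-ν_ε(x, K_{ϰ′}(ε)) ≤ l_ε^p for all sufficiently small ε; (h4) there is p′ ≥ 0 such that for all sufficiently small ε and every interval [a,b] ⊆ K_{ϰ″}(ε) there exist two monotone functions φ_{+,ε}, φ_{−,ε} : ℝ → ℝ, each bounded in absolute value by l_ε^{p′}, with bar-μ_ε(y,[a,b]) = φ_{+,ε}(y) + φ_{−,ε}(y) for all y ∈ ℝ. Then there is δ″ > 0 such that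 sup over x ∈ K_ϰ(ε) and intervals [a,b] ⊆ K_{ϰ″}(ε) of |∫_{K_{ϰ′}(ε)} μ_ε(y,[a,b]) ν_ε(x,dy) − ∫_{K_{ϰ′}(ε)} bar-μ_ε(y,[a,b]) bar-ν_ε(x,dy)| is o(ε^{δ″}) as ε → 0⁺. -/

import Mathlib

open MeasureTheory

/-- `lE ε = log (1/ε)`. -/
noncomputable def lE (ε : ℝ) : ℝ := Real.log (1 / ε)

/-- `K_ϰ(ε) = [-(l_ε)^ϰ, (l_ε)^ϰ]`. -/
noncomputable def Kset (ϰ ε : ℝ) : Set ℝ := Set.Icc (-(lE ε ^ ϰ)) (lE ε ^ ϰ)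

open Filter Real Set in
lemma lE_pos {ε : ℝ} (h0 : 0 < ε) (h1 : ε < 1) : 0 < lE ε := by
  have : 1 < 1 / ε := by rw [lt_div_iff₀ h0]; linarith
  exact Real.log_pos this

lemma ev_to_eps0 {P : ℝ → Prop} (h : ∀ᶠ ε in nhdsWithin 0 (Set.Ioi (0:ℝ)), P ε) :
    ∃ ε₀ : ℝ, 0 < ε₀ ∧ ∀ ε : ℝ, 0 < ε → ε < ε₀ → P ε := by
  rw [Filter.eventually_iff, mem_nhdsGT_iff_exists_Ioo_subset] at h
  obtain ⟨u, hu, hsub⟩ := h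
  exact ⟨u, hu, fun ε h1 h2 => hsub ⟨h1, h2⟩⟩

lemma lE_small (q β c : ℝ) (hβ : 0 < β) (hc : 0 < c) :
    ∀ᶠ ε in nhdsWithin 0 (Set.Ioi (0:ℝ)), lE ε ^ q * ε ^ β ≤ c := by
  have h1 : (fun x : ℝ => |Real.log x| ^ q) =o[nhdsWithin 0 (Set.Ioi (0:ℝ))]
      fun x => x ^ (-(β/2)) := isLittleO_abs_log_rpow_rpow_nhdsGT_zero q (by linarith)
  have h2 := h1.def one_pos
  set m : ℝ := min 1 (c ^ (2/β)) with hm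
  have hm0 : 0 < m := lt_min one_pos (Real.rpow_pos_of_pos hc _)
  have h3 : Set.Ioo (0:ℝ) m ∈ nhdsWithin 0 (Set.Ioi (0:ℝ)) :=
    Ioo_mem_nhdsGT_of_mem ⟨le_refl 0, hm0⟩
  filter_upwards [self_mem_nhdsWithin, h2, Filter.eventually_of_mem h3 (fun x hx => hx.2)]
    with x hx hlt hxm
  have hx0 : (0:ℝ) < x := hx
  have hx1 : x < 1 := lt_of_lt_of_le hxm (min_le_left _ _)
  have hlE : lE x = |Real.log x| := by
    rw [lE, one_div, Real.log_inv, abs_of_nonpos (Real.log_nonpos hx0.le hx1.le)]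
  have hnorm : |Real.log x| ^ q ≤ x ^ (-(β/2)) := by
    have := hlt
    rw [Real.norm_eq_abs, Real.norm_eq_abs, one_mul] at this
    calc |Real.log x| ^ q ≤ |(|Real.log x| ^ q)| := le_abs_self _
      _ ≤ |x ^ (-(β/2))| := this
      _ = x ^ (-(β/2)) := abs_of_nonneg (Real.rpow_nonneg hx0.le _)
  calc lE x ^ q * x ^ β ≤ x ^ (-(β/2)) * x ^ β := by
        rw [hlE]; exact mul_le_mul_of_nonneg_right hnorm (Real.rpow_nonneg hx0.le _)
    _ = x ^ (β/2) := by rw [← Real.rpow_add hx0]; ring_nf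
    _ ≤ (c ^ (2/β)) ^ (β/2) := by
        refine Real.rpow_le_rpow hx0.le (le_of_lt (lt_of_lt_of_le hxm (min_le_right _ _))) (by positivity)
    _ = c := by
        rw [← Real.rpow_mul hc.le]
        rw [show 2/β*(β/2) = 1 by field_simp]
        exact Real.rpow_one c

open Filter Real Set in
-- helper: remove one point
open Filter Real Set in
lemma remove_pt {A B : Measure ℝ} {L cδ k : ℝ}
    (hA : ∀ s : Set ℝ, Bornology.IsBounded s → A s < ⊤)
    (hB : ∀ s : Set ℝ, Bornology.IsBounded s → B s < ⊤)
    (hd : ∀ a b : ℝ, a ≤ b → Set.Icc a b ⊆ Set.Icc (-L) L →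
      |(A (Set.Icc a b)).toReal - (B (Set.Icc a b)).toReal| ≤ cδ)
    {s s' : Set ℝ} {t : ℝ} (hk : |(A s).toReal - (B s).toReal| ≤ k)
    (hts : s = s' ∪ {t}) (hts' : t ∉ s') (hsub : s ⊆ Set.Icc (-L) L)
    (hs'm : MeasurableSet s') :
    |(A s').toReal - (B s').toReal| ≤ k + cδ := by
  have htmem : t ∈ Set.Icc (-L) L := hsub (by rw [hts]; exact Set.mem_union_right _ rfl)
  have hsbd : Bornology.IsBounded s := (Metric.isBounded_Icc (-L) L).subset hsub
  have hs'bd : Bornology.IsBounded s' :=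
    hsbd.subset (by rw [hts]; exact Set.subset_union_left)
  have hAs : A s = A s' + A {t} := by
    rw [hts, Set.union_comm, measure_union (by simpa [Set.disjoint_singleton_left] using hts') hs'm,
      add_comm]
  have hBs : B s = B s' + B {t} := by
    rw [hts, Set.union_comm, measure_union (by simpa [Set.disjoint_singleton_left] using hts') hs'm,
      add_comm]
  have hApt : |(A {t}).toReal - (B {t}).toReal| ≤ cδ := by
    have := hd t t le_rfl (by simpa using htmem)
    simpa using this
  have hAfin : A s' ≠ ⊤ := (hA s' hs'bd).ne
  have hBfin : B s' ≠ ⊤ := (hB s' hs'bd).ne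
  have hAtfin : A {t} ≠ ⊤ := (hA {t} (Bornology.isBounded_singleton)).ne
  have hBtfin : B {t} ≠ ⊤ := (hB {t} (Bornology.isBounded_singleton)).ne
  have eA : (A s).toReal = (A s').toReal + (A {t}).toReal := by
    rw [hAs, ENNReal.toReal_add hAfin hAtfin]
  have eB : (B s).toReal = (B s').toReal + (B {t}).toReal := by
    rw [hBs, ENNReal.toReal_add hBfin hBtfin]
  rw [eA, eB] at hk
  have h1 := abs_sub_abs_le_abs_sub ((A s').toReal - (B s').toReal) (0:ℝ)
  rw [abs_le] at hk hApt ⊢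
  constructor <;> linarith [hk.1, hk.2, hApt.1, hApt.2]

open Filter Real Set in
lemma ordconn_bound {A B : Measure ℝ} {L cδ : ℝ} (hL : 0 ≤ L) (hcδ : 0 ≤ cδ)
    (hA : ∀ s : Set ℝ, Bornology.IsBounded s → A s < ⊤)
    (hB : ∀ s : Set ℝ, Bornology.IsBounded s → B s < ⊤)
    (hd : ∀ a b : ℝ, a ≤ b → Set.Icc a b ⊆ Set.Icc (-L) L →
      |(A (Set.Icc a b)).toReal - (B (Set.Icc a b)).toReal| ≤ cδ)
    (s : Set ℝ) (hs : s.OrdConnected) (hsub : s ⊆ Set.Icc (-L) L) :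
    |(A s).toReal - (B s).toReal| ≤ 3 * cδ := by
  rcases s.eq_empty_or_nonempty with rfl | hne
  · simp; linarith
  have hbdd : BddBelow s := ⟨-L, fun y hy => (hsub hy).1⟩
  have hbda : BddAbove s := ⟨L, fun y hy => (hsub hy).2⟩
  set a := sInf s with ha
  set b := sSup s with hb
  have haL : -L ≤ a := le_csInf hne fun y hy => (hsub hy).1
  have hbL : b ≤ L := csSup_le hne fun y hy => (hsub hy).2
  have hab : a ≤ b := csInf_le_csSup hne hbdd hbda
  have hIccsub : Set.Icc a b ⊆ Set.Icc (-L) L := Set.Icc_subset_Icc haL hbL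
  have hIcc : |(A (Set.Icc a b)).toReal - (B (Set.Icc a b)).toReal| ≤ cδ := hd a b hab hIccsub
  have hmem := hs.isPreconnected.mem_intervals
  simp only [Set.mem_insert_iff, Set.mem_singleton_iff] at hmem
  rw [← ha, ← hb] at hmem
  -- rule out unbounded cases
  have hnotIci : s ≠ Set.Ici a := by
    intro h
    have hm1 : max a L + 1 ∈ s := by
      rw [h, Set.mem_Ici]
      have := le_max_left a L
      linarith
    have hm2 := (hsub hm1).2
    have hm3 := le_max_right a L
    linarith
  have hnotIoi : s ≠ Set.Ioi a := by
    intro h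
    have hm1 : max a L + 1 ∈ s := by
      rw [h, Set.mem_Ioi]
      have := le_max_left a L
      linarith
    have hm2 := (hsub hm1).2
    have hm3 := le_max_right a L
    linarith
  have hnotIic : s ≠ Set.Iic b := by
    intro h
    have hm1 : min b (-L) - 1 ∈ s := by
      rw [h, Set.mem_Iic]
      have := min_le_left b (-L)
      linarith
    have hm2 := (hsub hm1).1
    have hm3 := min_le_right b (-L)
    linarith
  have hnotIio : s ≠ Set.Iio b := by
    intro h
    have hm1 : min b (-L) - 1 ∈ s := by
      rw [h, Set.mem_Iio]
      have := min_le_left b (-L)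
      linarith
    have hm2 := (hsub hm1).1
    have hm3 := min_le_right b (-L)
    linarith
  have hnotuniv : s ≠ Set.univ := by
    intro h
    have hm1 : L + 1 ∈ s := by rw [h]; trivial
    have hm2 := (hsub hm1).2
    linarith
  rcases hmem with h | h | h | h | h | h | h | h | h | h
  · rw [h]; linarith
  · -- Ico : Icc = Ico ∪ {b}
    have := remove_pt hA hB hd (s := Set.Icc a b) (s' := Set.Ico a b) (t := b)
      hIcc (by rw [Set.Ico_union_right hab]) (by simp) hIccsub measurableSet_Ico
    rw [h]; linarith
  · have := remove_pt hA hB hd (s := Set.Icc a b) (s' := Set.Ioc a b) (t := a)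
      hIcc (Set.Ioc_union_left hab).symm
      (by simp) hIccsub measurableSet_Ioc
    rw [h]; linarith
  · -- Ioo
    have h1 := remove_pt hA hB hd (s := Set.Icc a b) (s' := Set.Ioc a b) (t := a)
      hIcc (Set.Ioc_union_left hab).symm
      (by simp) hIccsub measurableSet_Ioc
    rcases eq_or_lt_of_le hab with heq | hlt
    · have : Set.Ioo a b = ∅ := by rw [heq]; exact Set.Ioo_self b
      rw [h, this]; simp; linarith
    · have h2 := remove_pt hA hB hd (s := Set.Ioc a b) (s' := Set.Ioo a b) (t := b)
        h1 (by rw [Set.Ioo_union_right hlt]) (by simp) (le_trans Set.Ioc_subset_Icc_self hIccsub)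
        measurableSet_Ioo
      rw [h]; linarith
  · exact absurd h hnotIci
  · exact absurd h hnotIoi
  · exact absurd h hnotIic
  · exact absurd h hnotIio
  · exact absurd h hnotuniv
  · rw [h]; simp; linarith

open Filter Real Set in
lemma mono_int_diff {A B : Measure ℝ} {L cδ Mν Mφ : ℝ} (hL : 0 ≤ L) (hcδ : 0 ≤ cδ)
    (hA : ∀ s : Set ℝ, Bornology.IsBounded s → A s < ⊤)
    (hB : ∀ s : Set ℝ, Bornology.IsBounded s → B s < ⊤)
    (hd : ∀ a b : ℝ, a ≤ b → Set.Icc a b ⊆ Set.Icc (-L) L →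
      |(A (Set.Icc a b)).toReal - (B (Set.Icc a b)).toReal| ≤ cδ)
    (hBK : (B (Set.Icc (-L) L)).toReal ≤ Mν)
    (φ : ℝ → ℝ) (hφ : Monotone φ ∨ Antitone φ) (hMφ : 0 < Mφ) (hφb : ∀ y, |φ y| ≤ Mφ)
    (N : ℕ) (hN : 0 < N) :
    |(∫ y in Set.Icc (-L) L, φ y ∂A) - ∫ y in Set.Icc (-L) L, φ y ∂B| ≤
      (2 * Mφ / N) * (2 * Mν + cδ) + 7 * Mφ * cδ := by
  classical
  set K : Set ℝ := Set.Icc (-L) L with hK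
  have hKm : MeasurableSet K := measurableSet_Icc
  have hKbd : Bornology.IsBounded K := Metric.isBounded_Icc _ _
  have hAK : A K < ⊤ := hA K hKbd
  have hBKfin : B K < ⊤ := hB K hKbd
  haveI : IsFiniteMeasure (A.restrict K) := ⟨by rwa [Measure.restrict_apply_univ]⟩
  haveI : IsFiniteMeasure (B.restrict K) := ⟨by rwa [Measure.restrict_apply_univ]⟩
  have hKd : |(A K).toReal - (B K).toReal| ≤ cδ := hd (-L) L (by linarith) subset_rfl
  have hMν0 : 0 ≤ Mν := le_trans ENNReal.toReal_nonneg hBK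
  have hAKle : (A K).toReal ≤ Mν + cδ := by
    have := abs_le.1 hKd; linarith [this.2]
  have hφm : Measurable φ := hφ.elim Monotone.measurable Antitone.measurable
  set h : ℝ := 2 * Mφ / N with hh
  have hhpos : 0 < h := by positivity
  set m' : ℝ := -Mφ with hm'
  set S : ℕ → Set ℝ := fun i => φ ⁻¹' Set.Ici (m' + (i + 1) * h) with hS
  have hSoc : ∀ i, (S i).OrdConnected := fun i =>
    hφ.elim (fun hm => Set.ordConnected_Ici.preimage_mono hm)
      (fun hm => Set.ordConnected_Ici.preimage_anti hm)
  have hSm : ∀ i, MeasurableSet (S i) := fun i => (hSoc i).measurableSet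
  set step : ℝ → ℝ := fun y => m' + ∑ i ∈ Finset.range N, Set.indicator (S i) (fun _ => h) y
    with hstepdef
  -- pointwise bounds
  have hstep : ∀ y, step y ≤ φ y ∧ φ y ≤ step y + h := by
    intro y
    set v : ℝ := φ y with hv
    have hvb : |v| ≤ Mφ := hφb y
    have hvl : m' ≤ v := by rw [hm']; linarith [(abs_le.1 hvb).1]
    have hvu : v ≤ Mφ := (abs_le.1 hvb).2
    have hNh : (N : ℝ) * h = 2 * Mφ := by
      rw [hh]; field_simp
    set k : ℕ := min N (Nat.floor ((v - m') / h)) with hk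
    have hfil : (Finset.range N).filter (fun i : ℕ => m' + ((i : ℝ) + 1) * h ≤ v) = Finset.range k := by
      ext i
      simp only [Finset.mem_filter, Finset.mem_range, hk, lt_min_iff]
      constructor
      · rintro ⟨hiN, hile⟩
        refine ⟨hiN, ?_⟩
        have : ((i : ℝ) + 1) ≤ (v - m') / h := by
          rw [le_div_iff₀ hhpos]; linarith
        have : (i + 1 : ℕ) ≤ Nat.floor ((v - m') / h) := by
          rw [Nat.le_floor_iff (div_nonneg (by linarith) hhpos.le)]
          push_cast; linarith
        omega
      · rintro ⟨hiN, hif⟩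
        refine ⟨hiN, ?_⟩
        have h1 : (i + 1 : ℕ) ≤ Nat.floor ((v - m') / h) := hif
        rw [Nat.le_floor_iff (div_nonneg (by linarith) hhpos.le)] at h1
        push_cast at h1
        have : (↑i + 1) * h ≤ v - m' := by
          rw [← le_div_iff₀ hhpos]; linarith
        linarith
    have hsum : step y = m' + k * h := by
      rw [hstepdef]
      simp only
      congr 1
      have : ∀ i : ℕ, Set.indicator (S i) (fun _ => h) y
          = if m' + ((i : ℝ) + 1) * h ≤ v then h else 0 := by
        intro i
        by_cases hyi : m' + ((i : ℝ) + 1) * h ≤ φ y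
        · rw [Set.indicator_of_mem (show y ∈ S i from hyi), if_pos hyi]
        · rw [Set.indicator_of_notMem (show y ∉ S i from hyi), if_neg hyi]
      rw [Finset.sum_congr rfl (fun i _ => this i), ← Finset.sum_filter, hfil,
        Finset.sum_const, Finset.card_range, nsmul_eq_mul]
    have hkfl : (k : ℝ) ≤ (v - m') / h := by
      have h1 : (k : ℕ) ≤ Nat.floor ((v - m') / h) := min_le_right _ _
      calc (k : ℝ) ≤ (Nat.floor ((v - m') / h) : ℝ) := by exact_mod_cast h1
        _ ≤ (v - m') / h := Nat.floor_le (div_nonneg (by linarith) hhpos.le)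
    have hlow : (k : ℝ) * h ≤ v - m' := by
      rw [← le_div_iff₀ hhpos]; exact hkfl
    have hup : v - m' ≤ (k : ℝ) * h + h := by
      rcases le_or_gt (Nat.floor ((v - m') / h)) N with hc | hc
      · have hkeq : k = Nat.floor ((v - m') / h) := min_eq_right hc
        have := Nat.lt_floor_add_one ((v - m') / h)
        rw [div_lt_iff₀ hhpos] at this
        rw [hkeq]
        push_cast at this ⊢
        linarith
      · have hkeq : k = N := min_eq_left hc.le
        rw [hkeq, hNh]
        linarith
    constructor
    · rw [hsum]; linarith
    · rw [hsum]; linarith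
  -- integrals of step
  have hindint : ∀ (ρ : Measure ℝ) [IsFiniteMeasure ρ], ∀ i,
      Integrable (fun y => Set.indicator (S i) (fun _ => h) y) ρ := by
    intro ρ _ i
    exact (integrable_const h).indicator (hSm i)
  have hstepint : ∀ (ρ : Measure ℝ) [IsFiniteMeasure ρ], Integrable step ρ := by
    intro ρ _
    exact (integrable_const m').add (integrable_finset_sum _ fun i _ => hindint ρ i)
  have hstepeq : ∀ (ρ : Measure ℝ), (∀ s : Set ℝ, Bornology.IsBounded s → ρ s < ⊤) →
      ∀ [IsFiniteMeasure (ρ.restrict K)],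
      ∫ y in K, step y ∂ρ = m' * (ρ K).toReal
        + ∑ i ∈ Finset.range N, h * (ρ (S i ∩ K)).toReal := by
    intro ρ hρ _
    rw [hstepdef]
    simp only
    rw [integral_add (integrable_const m') (integrable_finset_sum _ fun i _ =>
      hindint (ρ.restrict K) i), integral_const, measureReal_restrict_apply_univ, Measure.real,
      integral_finset_sum _ (fun i _ => hindint (ρ.restrict K) i)]
    congr 1
    · rw [smul_eq_mul, mul_comm]
    · refine Finset.sum_congr rfl fun i _ => ?_
      rw [integral_indicator_const (h : ℝ) (hSm i), measureReal_restrict_apply (hSm i), Measure.real,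
        smul_eq_mul, mul_comm]
  -- bound on step difference
  have hstepdiff : |(∫ y in K, step y ∂A) - ∫ y in K, step y ∂B| ≤ 7 * Mφ * cδ := by
    rw [hstepeq A hA, hstepeq B hB]
    have e1 : m' * (A K).toReal + ∑ i ∈ Finset.range N, h * (A (S i ∩ K)).toReal
        - (m' * (B K).toReal + ∑ i ∈ Finset.range N, h * (B (S i ∩ K)).toReal)
        = m' * ((A K).toReal - (B K).toReal)
          + ∑ i ∈ Finset.range N, h * ((A (S i ∩ K)).toReal - (B (S i ∩ K)).toReal) := by
      simp only [mul_sub]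
      rw [Finset.sum_sub_distrib]
      ring
    rw [e1]
    have hper : ∀ i, |(A (S i ∩ K)).toReal - (B (S i ∩ K)).toReal| ≤ 3 * cδ := by
      intro i
      exact ordconn_bound hL hcδ hA hB hd (S i ∩ K)
        ((hSoc i).inter Set.ordConnected_Icc) Set.inter_subset_right
    calc |m' * ((A K).toReal - (B K).toReal)
          + ∑ i ∈ Finset.range N, h * ((A (S i ∩ K)).toReal - (B (S i ∩ K)).toReal)|
        ≤ |m' * ((A K).toReal - (B K).toReal)|
          + |∑ i ∈ Finset.range N, h * ((A (S i ∩ K)).toReal - (B (S i ∩ K)).toReal)| :=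
          abs_add_le _ _
      _ ≤ Mφ * cδ + (N : ℝ) * (h * (3 * cδ)) := by
          gcongr
          · rw [abs_mul]
            have : |m'| = Mφ := by rw [hm', abs_neg, abs_of_pos hMφ]
            rw [this]
            exact mul_le_mul_of_nonneg_left hKd hMφ.le
          · calc |∑ i ∈ Finset.range N, h * ((A (S i ∩ K)).toReal - (B (S i ∩ K)).toReal)|
                ≤ ∑ i ∈ Finset.range N, |h * ((A (S i ∩ K)).toReal - (B (S i ∩ K)).toReal)| :=
                Finset.abs_sum_le_sum_abs _ _
              _ ≤ ∑ i ∈ Finset.range N, h * (3 * cδ) := by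
                  refine Finset.sum_le_sum fun i _ => ?_
                  rw [abs_mul, abs_of_pos hhpos]
                  exact mul_le_mul_of_nonneg_left (hper i) hhpos.le
              _ = (N : ℝ) * (h * (3 * cδ)) := by
                  rw [Finset.sum_const, Finset.card_range, nsmul_eq_mul]
      _ ≤ 7 * Mφ * cδ := by
          have hNh : (N : ℝ) * h = 2 * Mφ := by rw [hh]; field_simp
          nlinarith [hNh]
  -- φ integrable
  have hφint : ∀ (ρ : Measure ℝ) [IsFiniteMeasure ρ], Integrable φ ρ := by
    intro ρ _
    refine Integrable.mono' (integrable_const Mφ) hφm.aestronglyMeasurable ?_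
    exact Eventually.of_forall fun y => by rw [Real.norm_eq_abs]; exact hφb y
  -- difference between φ and step integrals
  have hφstep : ∀ (ρ : Measure ℝ), (∀ s : Set ℝ, Bornology.IsBounded s → ρ s < ⊤) →
      ∀ [IsFiniteMeasure (ρ.restrict K)],
      0 ≤ (∫ y in K, φ y ∂ρ) - (∫ y in K, step y ∂ρ) ∧
      (∫ y in K, φ y ∂ρ) - (∫ y in K, step y ∂ρ) ≤ h * (ρ K).toReal := by
    intro ρ hρ _
    rw [← integral_sub (hφint (ρ.restrict K)) (hstepint (ρ.restrict K))]
    constructor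
    · refine setIntegral_nonneg hKm fun y _ => ?_
      linarith [(hstep y).1]
    · calc ∫ y in K, (φ y - step y) ∂ρ ≤ ∫ _ in K, h ∂ρ := by
            refine setIntegral_mono_on ((hφint (ρ.restrict K)).sub (hstepint (ρ.restrict K)))
              (integrable_const h) hKm fun y _ => ?_
            linarith [(hstep y).2]
        _ = (ρ K).toReal * h := by rw [setIntegral_const, smul_eq_mul, Measure.real]
        _ = h * (ρ K).toReal := mul_comm _ _
  obtain ⟨hA0, hA1⟩ := hφstep A hA
  obtain ⟨hB0, hB1⟩ := hφstep B hB
  have key : (∫ y in K, φ y ∂A) - ∫ y in K, φ y ∂B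
      = ((∫ y in K, φ y ∂A) - (∫ y in K, step y ∂A))
        - ((∫ y in K, φ y ∂B) - (∫ y in K, step y ∂B))
        + ((∫ y in K, step y ∂A) - (∫ y in K, step y ∂B)) := by ring
  rw [key]
  have hBKR : (B K).toReal ≤ Mν := hBK
  calc |_ + ((∫ y in K, step y ∂A) - (∫ y in K, step y ∂B))|
      ≤ |((∫ y in K, φ y ∂A) - (∫ y in K, step y ∂A))
        - ((∫ y in K, φ y ∂B) - (∫ y in K, step y ∂B))|
        + |(∫ y in K, step y ∂A) - (∫ y in K, step y ∂B)| := abs_add_le _ _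
    _ ≤ (2 * Mφ / N) * (2 * Mν + cδ) + 7 * Mφ * cδ := by
        refine add_le_add ?_ hstepdiff
        rw [abs_sub_le_iff]
        constructor
        · have : h * (A K).toReal ≤ h * (Mν + cδ) := mul_le_mul_of_nonneg_left hAKle hhpos.le
          rw [hh] at *
          nlinarith
        · have : h * (B K).toReal ≤ h * Mν := mul_le_mul_of_nonneg_left hBKR hhpos.le
          rw [hh] at *
          nlinarith

open Filter Real Set in
set_option maxHeartbeats 1000000 in
theorem stmt11 (ν νbar μ μbar : ℝ → ProbabilityTheory.Kernel ℝ ℝ) (ϰ ϰ' ϰ'' : ℝ)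
    (hϰ : 0 < ϰ) (hϰ' : 0 < ϰ') (hϰ'' : 0 < ϰ'')
    (hfin : ∀ ε ∈ Set.Ioo (0:ℝ) 1, ∀ x : ℝ, ∀ s : Set ℝ, Bornology.IsBounded s →
      ν ε x s < ⊤ ∧ νbar ε x s < ⊤ ∧ μ ε x s < ⊤ ∧ μbar ε x s < ⊤)
    (h1 : ∃ δ : ℝ, 0 < δ ∧ ∀ c : ℝ, 0 < c → ∃ ε₀ : ℝ, 0 < ε₀ ∧
      ∀ ε : ℝ, 0 < ε → ε < ε₀ → ε < 1 →
      ∀ x ∈ Kset ϰ ε, ∀ a b : ℝ, a ≤ b → Set.Icc a b ⊆ Kset ϰ' ε →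
        |(ν ε x (Set.Icc a b)).toReal - (νbar ε x (Set.Icc a b)).toReal| ≤ c * ε ^ δ)
    (h2 : ∃ δ' : ℝ, 0 < δ' ∧ ∀ c : ℝ, 0 < c → ∃ ε₀ : ℝ, 0 < ε₀ ∧
      ∀ ε : ℝ, 0 < ε → ε < ε₀ → ε < 1 →
      ∀ y ∈ Kset ϰ' ε, ∀ a b : ℝ, a ≤ b → Set.Icc a b ⊆ Kset ϰ'' ε →
        |(μ ε y (Set.Icc a b)).toReal - (μbar ε y (Set.Icc a b)).toReal| ≤ c * ε ^ δ')
    (h3 : ∃ p : ℝ, 0 ≤ p ∧ ∃ ε₀ : ℝ, 0 < ε₀ ∧ ∀ ε : ℝ, 0 < ε → ε < ε₀ → ε < 1 →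
      ∀ x ∈ Kset ϰ ε, (νbar ε x (Kset ϰ' ε)).toReal ≤ lE ε ^ p)
    (h4 : ∃ p' : ℝ, 0 ≤ p' ∧ ∃ ε₀ : ℝ, 0 < ε₀ ∧ ∀ ε : ℝ, 0 < ε → ε < ε₀ → ε < 1 →
      ∀ a b : ℝ, a ≤ b → Set.Icc a b ⊆ Kset ϰ'' ε →
      ∃ φp φm : ℝ → ℝ,
        (Monotone φp ∨ Antitone φp) ∧ (Monotone φm ∨ Antitone φm) ∧
        (∀ y, |φp y| ≤ lE ε ^ p') ∧ (∀ y, |φm y| ≤ lE ε ^ p') ∧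
        ∀ y, (μbar ε y (Set.Icc a b)).toReal = φp y + φm y) :
    ∃ δ'' : ℝ, 0 < δ'' ∧ ∀ c : ℝ, 0 < c → ∃ ε₀ : ℝ, 0 < ε₀ ∧
      ∀ ε : ℝ, 0 < ε → ε < ε₀ → ε < 1 →
      ∀ x ∈ Kset ϰ ε, ∀ a b : ℝ, a ≤ b → Set.Icc a b ⊆ Kset ϰ'' ε →
        |(∫ y in Kset ϰ' ε, (μ ε y (Set.Icc a b)).toReal ∂(ν ε x)) -
          (∫ y in Kset ϰ' ε, (μbar ε y (Set.Icc a b)).toReal ∂(νbar ε x))| ≤ c * ε ^ δ'' := by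
  classical
  obtain ⟨δ, hδ, H1⟩ := h1
  obtain ⟨δ', hδ', H2⟩ := h2
  obtain ⟨p, hp, ε₃, hε₃, H3⟩ := h3
  obtain ⟨p', hp', ε₄, hε₄, H4⟩ := h4
  set δ'' : ℝ := min δ δ' / 4 with hδ''def
  have hδ''pos : 0 < δ'' := by have := lt_min hδ hδ'; positivity
  refine ⟨δ'', hδ''pos, ?_⟩
  intro c hc
  obtain ⟨ε₁, hε₁, H1'⟩ := H1 1 one_pos
  obtain ⟨ε₂, hε₂, H2'⟩ := H2 1 one_pos
  -- eventual smallness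
  have hev1 : ∀ᶠ ε in nhdsWithin 0 (Set.Ioi (0:ℝ)), 1 ≤ lE ε := by
    have hmem : Set.Ioo (0:ℝ) (Real.exp (-1)) ∈ nhdsWithin 0 (Set.Ioi (0:ℝ)) :=
      Ioo_mem_nhdsGT_of_mem ⟨le_refl 0, Real.exp_pos _⟩
    refine Filter.eventually_of_mem hmem fun ε hε => ?_
    have hε0 : 0 < ε := hε.1
    have : Real.exp 1 ≤ 1 / ε := by
      rw [Real.exp_neg] at hε
      rw [le_div_iff₀ hε0]
      have h2 := hε.2
      have h3 : Real.exp 1 * ε < Real.exp 1 * (Real.exp 1)⁻¹ :=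
        mul_lt_mul_of_pos_left h2 (Real.exp_pos 1)
      rw [mul_inv_cancel₀ (Real.exp_pos 1).ne'] at h3
      linarith
    rw [lE, Real.le_log_iff_exp_le (by positivity)]
    exact this
  have hev2 := lE_small (p + p') δ'' (c / 80) hδ''pos (by positivity)
  obtain ⟨ε₅, hε₅, H5⟩ := ev_to_eps0 (hev1.and hev2)
  refine ⟨min ε₁ (min ε₂ (min ε₃ (min ε₄ ε₅))), by positivity, ?_⟩
  intro ε hε0 hεlt hε1 x hx a b hab hsubab
  have hεIoo : ε ∈ Set.Ioo (0:ℝ) 1 := ⟨hε0, hε1⟩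
  have hlt1 : ε < ε₁ := lt_of_lt_of_le hεlt (min_le_left _ _)
  have hlt2 : ε < ε₂ := lt_of_lt_of_le hεlt (le_trans (min_le_right _ _) (min_le_left _ _))
  have hlt3 : ε < ε₃ := lt_of_lt_of_le hεlt
    (le_trans (min_le_right _ _) (le_trans (min_le_right _ _) (min_le_left _ _)))
  have hlt4 : ε < ε₄ := lt_of_lt_of_le hεlt
    (le_trans (min_le_right _ _) (le_trans (min_le_right _ _)
      (le_trans (min_le_right _ _) (min_le_left _ _))))
  have hlt5 : ε < ε₅ := lt_of_lt_of_le hεlt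
    (le_trans (min_le_right _ _) (le_trans (min_le_right _ _)
      (le_trans (min_le_right _ _) (min_le_right _ _))))
  obtain ⟨hlE1, hsmall⟩ := H5 ε hε0 hlt5
  have hlE : 0 < lE ε := lE_pos hε0 hε1
  set L : ℝ := lE ε ^ ϰ' with hLdef
  have hL0 : 0 ≤ L := (Real.rpow_pos_of_pos hlE ϰ').le
  have hKeq : Kset ϰ' ε = Set.Icc (-L) L := rfl
  set K : Set ℝ := Set.Icc (-L) L with hKdef
  have hKm : MeasurableSet K := measurableSet_Icc
  have hKbd : Bornology.IsBounded K := Metric.isBounded_Icc _ _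
  set A : Measure ℝ := ν ε x with hAdef
  set B : Measure ℝ := νbar ε x with hBdef
  have hAfin : ∀ s : Set ℝ, Bornology.IsBounded s → A s < ⊤ :=
    fun s hs => (hfin ε hεIoo x s hs).1
  have hBfin : ∀ s : Set ℝ, Bornology.IsBounded s → B s < ⊤ :=
    fun s hs => (hfin ε hεIoo x s hs).2.1
  haveI : IsFiniteMeasure (A.restrict K) := ⟨by rw [Measure.restrict_apply_univ]; exact hAfin K hKbd⟩
  haveI : IsFiniteMeasure (B.restrict K) := ⟨by rw [Measure.restrict_apply_univ]; exact hBfin K hKbd⟩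
  set q1 : ℝ := ε ^ δ with hq1def
  have hq1pos : 0 < q1 := Real.rpow_pos_of_pos hε0 _
  have hd : ∀ a' b' : ℝ, a' ≤ b' → Set.Icc a' b' ⊆ Set.Icc (-L) L →
      |(A (Set.Icc a' b')).toReal - (B (Set.Icc a' b')).toReal| ≤ q1 := by
    intro a' b' hab' hsub'
    have := H1' ε hε0 hlt1 hε1 x hx a' b' hab' hsub'
    simpa using this
  set Mν : ℝ := lE ε ^ p with hMνdef
  have hMν1 : 1 ≤ Mν := Real.one_le_rpow hlE1 hp
  have hBK : (B K).toReal ≤ Mν := H3 ε hε0 hlt3 hε1 x hx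
  set Mφ : ℝ := lE ε ^ p' with hMφdef
  have hMφ1 : 1 ≤ Mφ := Real.one_le_rpow hlE1 hp'
  have hMφ0 : 0 < Mφ := by linarith
  obtain ⟨φp, φm, hφpmono, hφmmono, hφpb, hφmb, hgy⟩ := H4 ε hε0 hlt4 hε1 a b hab hsubab
  set N : ℕ := ⌈ε ^ (-(δ/2))⌉₊ with hNdef
  have hNpos : 0 < N := Nat.ceil_pos.2 (Real.rpow_pos_of_pos hε0 _)
  have hN0 : (0:ℝ) < N := by exact_mod_cast hNpos
  have hinvN : 1 / (N:ℝ) ≤ ε ^ (δ/2) := by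
    have h1 : ε ^ (-(δ/2)) ≤ (N:ℝ) := Nat.le_ceil _
    rw [Real.rpow_neg hε0.le] at h1
    rw [div_le_iff₀ hN0]
    have h2 : (ε ^ (δ/2))⁻¹ * (ε ^ (δ/2)) ≤ (N:ℝ) * (ε ^ (δ/2)) :=
      mul_le_mul_of_nonneg_right h1 (Real.rpow_nonneg hε0.le _)
    rw [inv_mul_cancel₀ (Real.rpow_pos_of_pos hε0 (δ/2)).ne'] at h2
    linarith
  -- integrands
  set f : ℝ → ℝ := fun y => (μ ε y (Set.Icc a b)).toReal with hfdef
  set g : ℝ → ℝ := fun y => (μbar ε y (Set.Icc a b)).toReal with hgdef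
  have hfmeas : Measurable f :=
    ENNReal.measurable_toReal.comp ((μ ε).measurable_coe measurableSet_Icc)
  have hgmeas : Measurable g :=
    ENNReal.measurable_toReal.comp ((μbar ε).measurable_coe measurableSet_Icc)
  have hgbd : ∀ y, |g y| ≤ 2 * Mφ := by
    intro y
    rw [hgdef]
    simp only
    rw [hgy y]
    calc |φp y + φm y| ≤ |φp y| + |φm y| := abs_add_le _ _
      _ ≤ 2 * Mφ := by linarith [hφpb y, hφmb y]
  have hfg : ∀ y ∈ K, |f y - g y| ≤ ε ^ δ' := by
    intro y hy
    have := H2' ε hε0 hlt2 hε1 y hy a b hab hsubab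
    simpa using this
  have hfbd : ∀ y ∈ K, |f y| ≤ 2 * Mφ + ε ^ δ' := by
    intro y hy
    calc |f y| = |g y + (f y - g y)| := by ring_nf
      _ ≤ |g y| + |f y - g y| := abs_add_le _ _
      _ ≤ 2 * Mφ + ε ^ δ' := add_le_add (hgbd y) (hfg y hy)
  have hfint : Integrable f (A.restrict K) := by
    refine Integrable.mono' (integrable_const (2 * Mφ + ε ^ δ')) hfmeas.aestronglyMeasurable ?_
    rw [ae_restrict_iff' hKm]
    exact Eventually.of_forall fun y hy => by rw [Real.norm_eq_abs]; exact hfbd y hy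
  have hgint : ∀ (ρ : Measure ℝ) [IsFiniteMeasure ρ], Integrable g ρ := by
    intro ρ _
    refine Integrable.mono' (integrable_const (2 * Mφ)) hgmeas.aestronglyMeasurable ?_
    exact Eventually.of_forall fun y => by rw [Real.norm_eq_abs]; exact hgbd y
  have hφint : ∀ (φ : ℝ → ℝ), Measurable φ → (∀ y, |φ y| ≤ Mφ) →
      ∀ (ρ : Measure ℝ) [IsFiniteMeasure ρ], Integrable φ ρ := by
    intro φ hm hb ρ _
    refine Integrable.mono' (integrable_const Mφ) hm.aestronglyMeasurable ?_
    exact Eventually.of_forall fun y => by rw [Real.norm_eq_abs]; exact hb y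
  have hφpmeas : Measurable φp := hφpmono.elim Monotone.measurable Antitone.measurable
  have hφmmeas : Measurable φm := hφmmono.elim Monotone.measurable Antitone.measurable
  -- Term 1
  have hAKle : (A K).toReal ≤ Mν + q1 := by
    have := abs_le.1 (hd (-L) L (by linarith) subset_rfl)
    linarith [this.2]
  have hT1 : |(∫ y in K, f y ∂A) - ∫ y in K, g y ∂A| ≤ (ε ^ δ') * (Mν + q1) := by
    rw [← integral_sub hfint (hgint (A.restrict K))]
    calc |∫ y in K, (f y - g y) ∂A| = ‖∫ y in K, (f y - g y) ∂A‖ := (Real.norm_eq_abs _).symm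
      _ ≤ (ε ^ δ') * (A K).toReal := by
          refine norm_setIntegral_le_of_norm_le_const (hAfin K hKbd) fun y hy => ?_
          rw [Real.norm_eq_abs]; exact hfg y hy
      _ ≤ (ε ^ δ') * (Mν + q1) :=
          mul_le_mul_of_nonneg_left hAKle (Real.rpow_nonneg hε0.le _)
  -- Term 2
  have hgrw : ∀ (ρ : Measure ℝ) [IsFiniteMeasure (ρ.restrict K)],
      ∫ y in K, g y ∂ρ = (∫ y in K, φp y ∂ρ) + ∫ y in K, φm y ∂ρ := by
    intro ρ _
    rw [← integral_add (hφint φp hφpmeas hφpb (ρ.restrict K))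
      (hφint φm hφmmeas hφmb (ρ.restrict K))]
    refine integral_congr_ae (Eventually.of_forall fun y => ?_)
    rw [hgdef]
    simp only
    exact hgy y
  have hT2p := mono_int_diff hL0 hq1pos.le hAfin hBfin hd hBK φp hφpmono hMφ0 hφpb N hNpos
  have hT2m := mono_int_diff hL0 hq1pos.le hAfin hBfin hd hBK φm hφmmono hMφ0 hφmb N hNpos
  have hT2 : |(∫ y in K, g y ∂A) - ∫ y in K, g y ∂B| ≤
      2 * ((2 * Mφ / N) * (2 * Mν + q1) + 7 * Mφ * q1) := by
    rw [hgrw A, hgrw B]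
    have e : (∫ y in K, φp y ∂A) + (∫ y in K, φm y ∂A)
        - ((∫ y in K, φp y ∂B) + (∫ y in K, φm y ∂B))
        = ((∫ y in K, φp y ∂A) - (∫ y in K, φp y ∂B))
          + ((∫ y in K, φm y ∂A) - (∫ y in K, φm y ∂B)) := by ring
    rw [e]
    calc |_| ≤ |(∫ y in K, φp y ∂A) - (∫ y in K, φp y ∂B)|
        + |(∫ y in K, φm y ∂A) - (∫ y in K, φm y ∂B)| := abs_add_le _ _
      _ ≤ 2 * ((2 * Mφ / N) * (2 * Mν + q1) + 7 * Mφ * q1) := by linarith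
  -- assemble
  have hmain : |(∫ y in K, f y ∂A) - ∫ y in K, g y ∂B| ≤
      (ε ^ δ') * (Mν + q1) + 2 * ((2 * Mφ / N) * (2 * Mν + q1) + 7 * Mφ * q1) := by
    calc |(∫ y in K, f y ∂A) - ∫ y in K, g y ∂B|
        ≤ |(∫ y in K, f y ∂A) - ∫ y in K, g y ∂A|
          + |(∫ y in K, g y ∂A) - ∫ y in K, g y ∂B| := abs_sub_le _ _ _
      _ ≤ _ := add_le_add hT1 hT2
  -- numeric estimates
  set E : ℝ := ε ^ δ'' with hEdef
  have hEpos : 0 < E := Real.rpow_pos_of_pos hε0 _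
  have hE1 : E ≤ 1 := Real.rpow_le_one hε0.le hε1.le hδ''pos.le
  have h2δ'' : ε ^ (2 * δ'') = E * E := by
    rw [hEdef, ← Real.rpow_add hε0]; ring_nf
  have hexp : ∀ β : ℝ, 2 * δ'' ≤ β → ε ^ β ≤ E * E := by
    intro β hβ
    rw [← h2δ'']
    exact Real.rpow_le_rpow_of_exponent_ge hε0 hε1.le hβ
  have hq1le : q1 ≤ E * E := hexp δ (by rw [hδ''def]; have := min_le_left δ δ'; linarith)
  have hq1le1 : q1 ≤ 1 := Real.rpow_le_one hε0.le hε1.le hδ.le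
  have hq2le : ε ^ δ' ≤ E * E := hexp δ' (by rw [hδ''def]; have := min_le_right δ δ'; linarith)
  have hq3le : ε ^ (δ/2) ≤ E * E := hexp (δ/2) (by rw [hδ''def]; have := min_le_left δ δ'; linarith)
  have hMW : Mφ * Mν = lE ε ^ (p + p') := by
    rw [hMφdef, hMνdef, ← Real.rpow_add hlE]; ring_nf
  have hWsmall : 80 * (Mφ * Mν) * E ≤ c := by
    rw [hMW]
    linarith [hsmall]
  have hdivN : 2 * Mφ / N ≤ 2 * Mφ * (E * E) := by
    calc 2 * Mφ / N = 2 * Mφ * (1 / N) := by ring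
      _ ≤ 2 * Mφ * (ε ^ (δ/2)) := by
          refine mul_le_mul_of_nonneg_left hinvN (by linarith)
      _ ≤ 2 * Mφ * (E * E) := mul_le_mul_of_nonneg_left hq3le (by linarith)
  have hfinal : (ε ^ δ') * (Mν + q1) + 2 * ((2 * Mφ / N) * (2 * Mν + q1) + 7 * Mφ * q1)
      ≤ c * E := by
    have b1 : (ε ^ δ') * (Mν + q1) ≤ (E * E) * (Mν + 1) := by
      refine mul_le_mul hq2le (by linarith) (by positivity) (by positivity)
    have b2 : (2 * Mφ / N) * (2 * Mν + q1) ≤ (2 * Mφ * (E * E)) * (2 * Mν + 1) := by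
      refine mul_le_mul hdivN (by linarith) (by positivity) (by positivity)
    have b3 : 7 * Mφ * q1 ≤ 7 * Mφ * (E * E) := by
      refine mul_le_mul_of_nonneg_left (le_trans hq1le (le_refl _)) (by linarith)
    have hEE : (0:ℝ) ≤ E * E := by positivity
    have t1 : Mν ≤ Mφ * Mν := le_mul_of_one_le_left (by linarith) hMφ1
    have t2 : Mφ ≤ Mφ * Mν := le_mul_of_one_le_right (by linarith) hMν1
    have t3 : (1:ℝ) ≤ Mφ * Mν := le_trans hMφ1 t2
    have binner : (Mν + 1) + 2 * ((2 * Mφ) * (2 * Mν + 1) + 7 * Mφ) ≤ 28 * (Mφ * Mν) := by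
      linarith [t1, t2, t3]
    have b4 : (E * E) * (Mν + 1) + 2 * ((2 * Mφ * (E * E)) * (2 * Mν + 1) + 7 * Mφ * (E * E))
        ≤ (E * E) * (28 * (Mφ * Mν)) := by
      calc (E * E) * (Mν + 1) + 2 * ((2 * Mφ * (E * E)) * (2 * Mν + 1) + 7 * Mφ * (E * E))
          = (E * E) * ((Mν + 1) + 2 * ((2 * Mφ) * (2 * Mν + 1) + 7 * Mφ)) := by ring
        _ ≤ (E * E) * (28 * (Mφ * Mν)) := mul_le_mul_of_nonneg_left binner hEE
    have b5 : (E * E) * (28 * (Mφ * Mν)) ≤ c * E := by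
      have hW0 : (0:ℝ) ≤ Mφ * Mν := mul_nonneg (by linarith) (by linarith)
      calc (E * E) * (28 * (Mφ * Mν)) ≤ (E * E) * (80 * (Mφ * Mν)) := by
            refine mul_le_mul_of_nonneg_left (by linarith) hEE
        _ = (80 * (Mφ * Mν) * E) * E := by ring
        _ ≤ c * E := mul_le_mul_of_nonneg_right hWsmall hEpos.le
    linarith
  exact le_trans hmain hfinal
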